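/- Suppose a < β < b and b = β^ℓ - c for some ℓ ≥ 2 and 1 ≤ c < a, so that a+b has one more base-β digit than b. Then (a,b) is not a reversed sum-product pair for base β. (The key algebraic step: the reversal condition forces c·(β^ℓ - a) = 1, which is impossible since β^ℓ > a+1.) -/

import Mathlib

/-- `(a, b)` is a reversed sum-product pair for base `β`: `a ≤ b` are positive
integers and the base-`β` digit sequence of `a * b` is the reverse of that of
`a + b` (in particular they have the same number of digits). -/
def IsRSP (β a b : ℕ) : Prop :=
  0 < a ∧ a ≤ b ∧ Nat.digits β (a * b) = (Nat.digits β (a + b)).reverse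

theorem stmt_9 (β a b c ℓ : ℕ) (hβ : 2 ≤ β) (ha0 : 0 < a) (ha : a < β)
    (hb : β < b) (hℓ : 2 ≤ ℓ) (hc1 : 1 ≤ c) (hc2 : c < a)
    (hbeq : b = β ^ ℓ - c) :
    ¬ IsRSP β a b := by
  rintro ⟨-, -, h⟩
  have hb1 : 1 < β := hβ
  set P := β ^ ℓ with hP
  have hPa : a + 2 ≤ P := by
    have h2 : β ^ 2 ≤ P := Nat.pow_le_pow_right (by omega) hℓ
    have : 2 * β ≤ β ^ 2 := by nlinarith
    omega
  set d := a - c with hd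
  have hd1 : 1 ≤ d := by omega
  have hdβ : d < β := by omega
  -- digits of single-digit numbers
  have hdig1 : Nat.digits β 1 = [1] := by
    rw [Nat.digits_def' hb1 (by omega)]
    simp [Nat.mod_eq_of_lt hb1, Nat.div_eq_of_lt hb1]
  have hdigd : Nat.digits β d = [d] := by
    rw [Nat.digits_def' hb1 (by omega)]
    simp [Nat.mod_eq_of_lt hdβ, Nat.div_eq_of_lt hdβ]
  -- digits of a + b
  have hsum : a + b = d + β ^ ((Nat.digits β d).length + (ℓ - 1)) * 1 := by
    rw [hdigd]
    have : 1 + (ℓ - 1) = ℓ := by omega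
    simp only [List.length_singleton, this, mul_one]
    omega
  have h2 : Nat.digits β (a + b) = [d] ++ List.replicate (ℓ - 1) 0 ++ [1] := by
    rw [hsum, ← Nat.digits_append_zeroes_append_digits hb1 (by omega : 0 < 1), hdigd, hdig1]
  -- digits of 1 + P * d
  have hprodval : 1 + β ^ ((Nat.digits β 1).length + (ℓ - 1)) * d = 1 + P * d := by
    rw [hdig1]
    have : 1 + (ℓ - 1) = ℓ := by omega
    simp [this]
    exact Or.inl hP.symm
  have h3 : Nat.digits β (1 + P * d) = [1] ++ List.replicate (ℓ - 1) 0 ++ [d] := by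
    rw [← hprodval, ← Nat.digits_append_zeroes_append_digits hb1 (by omega : 0 < d),
      hdigd, hdig1]
  have hrev : (Nat.digits β (a + b)).reverse = Nat.digits β (1 + P * d) := by
    rw [h2, h3]
    simp [List.reverse_append, List.reverse_replicate]
  rw [hrev] at h
  have hab : a * b = 1 + P * d := Nat.digits_inj_iff.mp h
  have hbP : b + c = P := by omega
  have key : a * P = 1 + P * d + a * c := by
    have : a * (b + c) = a * b + a * c := by ring
    rw [hbP, hab] at this
    omega
  -- Now derive c * (P - a) = 1, contradiction
  have hPd : P * d + P * c = P * a := by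
    have : d + c = a := by omega
    calc P * d + P * c = P * (d + c) := by ring
      _ = P * a := by rw [this]
  nlinarith [key, hPd, hc1, hPa, Nat.mul_le_mul (le_refl c) (show a + 2 ≤ P from hPa)]
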